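/- The adjunction I : C⁰ ⇄ Top : α, where I is the full inclusion of the category of Δ-generated (equivalently, arc-generated) topological spaces into the category of all topological spaces and α is its right adjoint (the coreflection replacing the topology of a space by the final topology for all continuous maps from standard simplices, equivalently all continuous curves from ℝ), is a Quillen equivalence between the model structure on C⁰ (weak equivalences the weak homotopy equivalences, fibrations the Serre fibrations) and the Quillen model structure on Top (weak equivalences the weak homotopy equivalences, fibrations the Serre fibrations). -/

import Mathlib

/-!
Statement 6: The adjunction consisting of the full inclusion `I` of the category of Δ-generated
(equivalently, arc-generated) topological spaces into the category of all topological spaces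
and its right adjoint (the coreflector, which replaces the topology of a space by the final
topology for all continuous maps from euclidean spaces, equivalently from the standard
simplices, equivalently from `ℝ`) is a Quillen equivalence between the model structure on
Δ-generated spaces (weak equivalences the weak homotopy equivalences, fibrations the Serre
fibrations) and the Quillen model structure on `Top` (weak equivalences the weak homotopy
equivalences, fibrations the Serre fibrations).
-/

open CategoryTheory CategoryTheory.Limits Topology Topology.Homotopy

noncomputable section

/-- `f` is a retract of `g` in the arrow category. -/
def IsRetractOf {C : Type*} [Category C] {X Y Z W : C} (f : X ⟶ Y) (g : Z ⟶ W) : Prop :=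
  ∃ (i : X ⟶ Z) (r : Z ⟶ X) (i' : Y ⟶ W) (r' : W ⟶ Y),
    i ≫ r = 𝟙 X ∧ i' ≫ r' = 𝟙 Y ∧ i ≫ g = f ≫ i' ∧ g ≫ r' = r ≫ f

/-- A model structure on a category `C`: three classes of morphisms (weak equivalences,
cofibrations, fibrations) satisfying the usual model category axioms. -/
structure ModelStructure (C : Type*) [Category C] where
  W : MorphismProperty C
  Cof : MorphismProperty C
  Fib : MorphismProperty C
  W_id : ∀ X : C, W (𝟙 X)
  W_comp : ∀ {X Y Z : C} (f : X ⟶ Y) (g : Y ⟶ Z), W f → W g → W (f ≫ g)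
  W_of_comp_left : ∀ {X Y Z : C} (f : X ⟶ Y) (g : Y ⟶ Z), W f → W (f ≫ g) → W g
  W_of_comp_right : ∀ {X Y Z : C} (f : X ⟶ Y) (g : Y ⟶ Z), W g → W (f ≫ g) → W f
  W_retract : ∀ {X Y Z W' : C} (f : X ⟶ Y) (g : Z ⟶ W'), IsRetractOf f g → W g → W f
  Cof_retract : ∀ {X Y Z W' : C} (f : X ⟶ Y) (g : Z ⟶ W'), IsRetractOf f g → Cof g → Cof f
  Fib_retract : ∀ {X Y Z W' : C} (f : X ⟶ Y) (g : Z ⟶ W'), IsRetractOf f g → Fib g → Fib f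
  lift_cof_trivFib : ∀ {A B X Y : C} (i : A ⟶ B) (p : X ⟶ Y),
    Cof i → Fib p → W p → HasLiftingProperty i p
  lift_trivCof_fib : ∀ {A B X Y : C} (i : A ⟶ B) (p : X ⟶ Y),
    Cof i → W i → Fib p → HasLiftingProperty i p
  fact_cof_trivFib : ∀ {X Y : C} (f : X ⟶ Y),
    ∃ (Z : C) (i : X ⟶ Z) (p : Z ⟶ Y), Cof i ∧ Fib p ∧ W p ∧ i ≫ p = f
  fact_trivCof_fib : ∀ {X Y : C} (f : X ⟶ Y),
    ∃ (Z : C) (i : X ⟶ Z) (p : Z ⟶ Y), Cof i ∧ W i ∧ Fib p ∧ i ≫ p = f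

/-- The map on homotopy groups induced by a continuous map. -/
def HomotopyGroup.map (N : Type*) {X Y : Type*} [TopologicalSpace X] [TopologicalSpace Y]
    (f : C(X, Y)) (x : X) : HomotopyGroup N X x → HomotopyGroup N Y (f x) :=
  Quotient.map
    (fun p => (⟨f.comp p.1, fun y hy => by
      simp only [ContinuousMap.comp_apply, p.2 y hy]⟩ : GenLoop N Y (f x)))
    (fun p q h => h.map (fun H => H.compContinuousMap f))

/-- A continuous map is a weak homotopy equivalence if it induces a bijection on path
components and isomorphisms on all homotopy groups at all basepoints. -/
def ContinuousMap.IsWeakHomotopyEquiv {X Y : Type*} [TopologicalSpace X] [TopologicalSpace Y]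
    (f : C(X, Y)) : Prop :=
  (∀ y : Y, ∃ x : X, Joined (f x) y) ∧
  (∀ x₀ x₁ : X, Joined (f x₀) (f x₁) → Joined x₀ x₁) ∧
  (∀ (n : ℕ) (x : X), Function.Bijective (HomotopyGroup.map (Fin (n + 1)) f x))

/-- The category of Δ-generated (equivalently, arc-generated) topological spaces, as a full
subcategory of `TopCat`. -/
def DeltaGeneratedCat : Type 1 :=
  CategoryTheory.ObjectProperty.FullSubcategory fun X : TopCat.{0} => DeltaGeneratedSpace X

namespace DeltaGenerated

instance : Category DeltaGeneratedCat := ObjectProperty.FullSubcategory.category _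

/-- The full inclusion of Δ-generated spaces into topological spaces. -/
def dgToTop : DeltaGeneratedCat ⥤ TopCat := ObjectProperty.ι _

/-- The coreflector: replace the topology of a space by the Δ-generated topology (the final
topology for all continuous maps from the euclidean spaces, equivalently from the standard
simplices, equivalently from `ℝ`). -/
def topToDg : TopCat.{0} ⥤ DeltaGeneratedCat where
  obj X := ⟨TopCat.of (DeltaGeneratedSpace.of (Y := X)),
    show DeltaGeneratedSpace (DeltaGeneratedSpace.of (Y := X)) from inferInstance⟩
  map {X Y} f := by
    exact ObjectProperty.homMk (TopCat.ofHom (⟨fun x => WithGeneratedByTopology.equiv.symm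
        (f (WithGeneratedByTopology.equiv x)),
      (IsGeneratedBy.equiv_symm_comp_continuous_iff (fun n ↦ Fin n → ℝ)
        (Y := DeltaGeneratedSpace.of (Y := X)) (Z := Y) _).2
        (f.hom.continuous.comp WithGeneratedByTopology.continuous_equiv)⟩ :
      C(DeltaGeneratedSpace.of (Y := X), DeltaGeneratedSpace.of (Y := Y))))

instance : DeltaGeneratedSpace PUnit.{1} :=
  IsGeneratedBy.iff_le_generatedBy.2 (isOpen_implies_isOpen_iff.mp fun s _ => by
    rcases s.eq_empty_or_nonempty with h | h
    · rw [h]; exact isOpen_empty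
    · rw [h.eq_univ]; exact isOpen_univ)

/-- The one-point Δ-generated space. -/
def pt : DeltaGeneratedCat :=
  ⟨TopCat.of PUnit.{1}, show DeltaGeneratedSpace PUnit from inferInstance⟩

instance (X : DeltaGeneratedCat) : Nonempty (X ⟶ pt) :=
  ⟨by exact ObjectProperty.homMk (TopCat.ofHom (⟨fun _ => PUnit.unit, continuous_const⟩ : C(X.obj, PUnit)))⟩

instance (X : DeltaGeneratedCat) : Subsingleton (X ⟶ pt) :=
  ⟨fun f g => by apply ObjectProperty.hom_ext; ext x; rfl⟩

instance : HasTerminal DeltaGeneratedCat := hasTerminal_of_unique pt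

instance : DeltaGeneratedSpace Empty :=
  IsGeneratedBy.iff_le_generatedBy.2 (isOpen_implies_isOpen_iff.mp fun s _ => by
    rw [s.eq_empty_of_isEmpty]; exact isOpen_empty)

/-- The empty Δ-generated space. -/
def empt : DeltaGeneratedCat :=
  ⟨TopCat.of Empty, show DeltaGeneratedSpace Empty from inferInstance⟩

instance (X : DeltaGeneratedCat) : Nonempty (empt ⟶ X) :=
  ⟨by exact ObjectProperty.homMk (TopCat.ofHom (⟨fun e => e.elim, by continuity⟩ : C(Empty, X.obj)))⟩

instance (X : DeltaGeneratedCat) : Subsingleton (empt ⟶ X) :=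
  ⟨fun f g => by apply ObjectProperty.hom_ext; ext x; exact x.elim⟩

instance : HasInitial DeltaGeneratedCat := hasInitial_of_unique empt

end DeltaGenerated

/-- The geometric realization functor, taking values in Δ-generated spaces. (Since the
geometric realization of a simplicial set is Δ-generated, applying the coreflector to the
topological geometric realization does not change its topology.) -/
def sSetToDg : SSet.{0} ⥤ DeltaGeneratedCat := SSet.toTop ⋙ DeltaGenerated.topToDg

/-- A Quillen pair: the left adjoint preserves cofibrations and trivial cofibrations. -/
def IsQuillenPair {C D : Type*} [Category C] [Category D]
    (MC : ModelStructure C) (MD : ModelStructure D) (F : C ⥤ D) : Prop :=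
  (∀ {X Y : C} (f : X ⟶ Y), MC.Cof f → MD.Cof (F.map f)) ∧
  (∀ {X Y : C} (f : X ⟶ Y), MC.Cof f → MC.W f → MD.Cof (F.map f) ∧ MD.W (F.map f))

/-- A Quillen pair is a Quillen equivalence if for every cofibrant `X` and fibrant `Y`, a map
`F X ⟶ Y` is a weak equivalence iff its adjunct `X ⟶ G Y` is. -/
def IsQuillenEquivalence {C D : Type*} [Category C] [Category D]
    [HasInitial C] [HasTerminal D]
    (MC : ModelStructure C) (MD : ModelStructure D)
    {F : C ⥤ D} {G : D ⥤ C} (adj : F ⊣ G) : Prop :=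
  ∀ (X : C) (Y : D), MC.Cof (initial.to X) → MD.Fib (terminal.from Y) →
    ∀ f : F.obj X ⟶ Y, MD.W f ↔ MC.W (adj.homEquiv X Y f)


section AuxTopology

open TopologicalSpace

theorem dg_of_retract {X Y : Type*} [TopologicalSpace X] [TopologicalSpace Y]
    [DeltaGeneratedSpace X] (f : X → Y) (s : Y → X) (hf : Continuous f) (hs : Continuous s)
    (hfs : ∀ y, f (s y) = y) : DeltaGeneratedSpace Y := by
  constructor
  have h1 : Continuous ((WithGeneratedByTopology.equiv (X := fun n ↦ Fin n → ℝ) (Y := Y)).symm ∘ f) :=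
    (IsGeneratedBy.equiv_symm_comp_continuous_iff (fun n ↦ Fin n → ℝ) (Y := X) (Z := Y) f).2 hf
  have h2 := h1.comp hs
  convert h2 using 1
  funext y
  simp [hfs]

theorem dg_of_homeomorph {X Y : Type*} [TopologicalSpace X] [TopologicalSpace Y]
    [DeltaGeneratedSpace X] (e : X ≃ₜ Y) : DeltaGeneratedSpace Y :=
  dg_of_retract e e.symm e.continuous e.symm.continuous e.apply_symm_apply

instance dg_euclidean (n : ℕ) : DeltaGeneratedSpace (Fin n → ℝ) := by
  constructor
  rw [continuous_def]
  intro U hU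
  rw [WithGeneratedByTopology.isOpen_iff] at hU
  exact hU (i := n) ⟨_, continuous_id⟩


instance dg_real : DeltaGeneratedSpace ℝ :=
  dg_of_retract (fun v : Fin 1 → ℝ => v 0) (fun x _ => x) (continuous_apply 0)
    (continuous_pi fun _ => continuous_id) (fun _ => rfl)

open unitInterval in
instance dg_unitInterval : DeltaGeneratedSpace I :=
  dg_of_retract (Set.projIcc (0:ℝ) 1 zero_le_one) (Subtype.val) continuous_projIcc
    continuous_subtype_val (fun y => Set.projIcc_val zero_le_one y)

open unitInterval in
instance dg_cube (n : ℕ) : DeltaGeneratedSpace (Fin n → I) :=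
  dg_of_retract (fun (v : Fin n → ℝ) i => Set.projIcc (0:ℝ) 1 zero_le_one (v i))
    (fun w i => (w i : ℝ))
    (continuous_pi fun i => continuous_projIcc.comp (continuous_apply i))
    (continuous_pi fun i => continuous_subtype_val.comp (continuous_apply i))
    (fun y => funext fun i => Set.projIcc_val zero_le_one (y i))

instance dg_real_prod (n : ℕ) : DeltaGeneratedSpace (ℝ × (Fin n → ℝ)) :=
  dg_of_retract (fun (v : Fin (n+1) → ℝ) => (v 0, fun i => v i.succ))
    (fun p => Fin.cons p.1 p.2)
    (by fun_prop)
    (by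
      apply continuous_pi
      intro i
      refine Fin.cases ?_ ?_ i
      · simpa using (continuous_fst : Continuous fun p : ℝ × (Fin n → ℝ) => p.1)
      · intro j
        simpa [Function.comp_def] using ((continuous_apply j).comp
          (continuous_snd : Continuous fun p : ℝ × (Fin n → ℝ) => p.2)))
    (fun p => by simp)

open unitInterval in
instance dg_prod_cube (n : ℕ) : DeltaGeneratedSpace (I × (Fin n → I)) :=
  dg_of_retract
    (fun (v : ℝ × (Fin n → ℝ)) =>
      (Set.projIcc (0:ℝ) 1 zero_le_one v.1, fun i => Set.projIcc (0:ℝ) 1 zero_le_one (v.2 i)))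
    (fun p => ((p.1 : ℝ), fun i => (p.2 i : ℝ)))
    (Continuous.prodMk (continuous_projIcc.comp continuous_fst)
      (continuous_pi fun i => continuous_projIcc.comp ((continuous_apply i).comp continuous_snd)))
    (by fun_prop)
    (fun p => by
      simp [Set.projIcc_val zero_le_one])

/- closed unit ball of sup-norm space is a retract -/
instance dg_closedBall (n : ℕ) :
    DeltaGeneratedSpace (Metric.closedBall (0 : Fin n → ℝ) 1) := by
  have hpos : ∀ x : Fin n → ℝ, (0:ℝ) < max 1 ‖x‖ := fun x => lt_max_of_lt_left one_pos
  refine dg_of_retract (X := Fin n → ℝ)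
    (fun x => ⟨(max 1 ‖x‖)⁻¹ • x, ?_⟩) (fun y => y.1) ?_ continuous_subtype_val ?_
  · rw [Metric.mem_closedBall, dist_zero_right, norm_smul, norm_inv, Real.norm_eq_abs,
      abs_of_pos (hpos x)]
    rw [inv_mul_le_iff₀ (hpos x), mul_one]
    exact le_max_right _ _
  · refine Continuous.subtype_mk ?_ _
    exact (Continuous.inv₀ (continuous_const.max continuous_norm)
      (fun x => (hpos x).ne')).smul continuous_id
  · rintro ⟨y, hy⟩
    ext
    simp only
    rw [Metric.mem_closedBall, dist_zero_right] at hy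
    rw [max_eq_left hy, inv_one, one_smul]

/-- transfer along a global homeomorphism carrying one set to another -/
theorem dg_of_image {E : Type*} [TopologicalSpace E] (h : E ≃ₜ E) {s t : Set E}
    (himg : h '' s = t) [DeltaGeneratedSpace t] : DeltaGeneratedSpace s := by
  refine dg_of_retract (X := t) (fun y => ⟨h.symm y.1, ?_⟩) (fun z => ⟨h z.1, ?_⟩)
    ?_ ?_ ?_
  · have hy : y.1 ∈ h '' s := himg.symm ▸ y.2
    obtain ⟨z, hz, hze⟩ := hy
    simpa [← hze] using hz
  · rw [← himg]; exact ⟨z.1, z.2, rfl⟩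
  · exact (h.symm.continuous.comp continuous_subtype_val).subtype_mk _
  · exact (h.continuous.comp continuous_subtype_val).subtype_mk _
  · intro y; ext; simp

/-- the "corner simplex" in `ℝⁿ` -/
def cornerSet (n : ℕ) : Set (Fin n → ℝ) :=
  {g | (∀ i, 0 ≤ g i) ∧ ∑ i, g i ≤ 1}

theorem cornerSet_convex (n : ℕ) : Convex ℝ (cornerSet n) := by
  rintro g ⟨hg0, hg1⟩ h ⟨hh0, hh1⟩ a b ha hb hab
  constructor
  · intro i
    have : 0 ≤ a * g i + b * h i :=
      add_nonneg (mul_nonneg ha (hg0 i)) (mul_nonneg hb (hh0 i))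
    simpa using this
  · have : ∑ i, (a * g i + b * h i) ≤ a + b := by
      rw [Finset.sum_add_distrib, ← Finset.mul_sum, ← Finset.mul_sum]
      refine add_le_add ?_ ?_
      · calc a * ∑ i, g i ≤ a * 1 := by gcongr
          _ = a := mul_one a
      · calc b * ∑ i, h i ≤ b * 1 := by gcongr
          _ = b := mul_one b
    simpa [hab] using this

theorem cornerSet_isClosed (n : ℕ) : IsClosed (cornerSet n) := by
  have : cornerSet n = (⋂ i, {g : Fin n → ℝ | 0 ≤ g i}) ∩ {g | ∑ i, g i ≤ 1} := by
    ext g; simp [cornerSet, Set.mem_iInter]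
  rw [this]
  exact IsClosed.inter (isClosed_iInter fun i =>
      isClosed_le continuous_const (continuous_apply i))
    (isClosed_le (by fun_prop) continuous_const)

theorem cornerSet_interior_nonempty (n : ℕ) : (interior (cornerSet n)).Nonempty := by
  set δ : ℝ := 1 / (2 * (n + 1)) with hδ
  have hδpos : 0 < δ := by positivity
  refine ⟨fun _ => δ, ?_⟩
  rw [mem_interior_iff_mem_nhds]
  refine Filter.mem_of_superset (Metric.ball_mem_nhds _ hδpos) ?_
  intro g hg
  rw [Metric.mem_ball] at hg
  have hcoord : ∀ i, dist (g i) δ < δ := fun i =>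
    lt_of_le_of_lt (dist_le_pi_dist g (fun _ => δ) i) hg
  constructor
  · intro i
    have := abs_lt.mp ((Real.dist_eq _ _) ▸ hcoord i)
    linarith [this.1]
  · have hub : ∀ i, g i < 2 * δ := by
      intro i
      have := abs_lt.mp ((Real.dist_eq _ _) ▸ hcoord i)
      linarith [this.2]
    calc ∑ i, g i ≤ ∑ _i : Fin n, 2 * δ := by
          exact Finset.sum_le_sum fun i _ => (hub i).le
      _ = n * (2 * δ) := by simp [mul_comm]
      _ ≤ 1 := by
          rw [hδ]
          have hpos : (0:ℝ) < 2 * (n + 1) := by positivity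
          have hn : (n : ℝ) ≤ n + 1 := by linarith
          calc (n:ℝ) * (2 * (1 / (2 * (n + 1)))) = (n:ℝ) / (n+1) := by
                field_simp
            _ ≤ 1 := by
                rw [div_le_one (by positivity)]
                linarith

theorem cornerSet_isBounded (n : ℕ) : Bornology.IsBounded (cornerSet n) := by
  refine (Metric.isBounded_closedBall (x := (0 : Fin n → ℝ)) (r := 1)).subset ?_
  rintro g ⟨hg0, hg1⟩
  rw [Metric.mem_closedBall, dist_zero_right]
  rw [pi_norm_le_iff_of_nonneg zero_le_one]
  intro i
  rw [Real.norm_eq_abs, abs_of_nonneg (hg0 i)]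
  exact le_trans (Finset.single_le_sum (fun j _ => hg0 j) (Finset.mem_univ i)) hg1

instance dg_cornerSet (n : ℕ) : DeltaGeneratedSpace (cornerSet n) := by
  obtain ⟨h, -, hcl, -⟩ := exists_homeomorph_image_interior_closure_frontier_eq_unitBall
    (cornerSet_convex n) (cornerSet_interior_nonempty n) (cornerSet_isBounded n)
  rw [(cornerSet_isClosed n).closure_eq] at hcl
  have : DeltaGeneratedSpace (Metric.closedBall (0 : Fin n → ℝ) 1) := dg_closedBall n
  exact dg_of_image h hcl

open NNReal in
theorem dg_stdSimplex (m : ℕ) :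
    DeltaGeneratedSpace {f : Fin (m+1) → ℝ≥0 | ∑ i, f i = 1} := by
  have key : ∀ (f : {f : Fin (m+1) → ℝ≥0 | ∑ i, f i = 1}),
      ∑ i : Fin m, ((f.1 i.castSucc : ℝ)) ≤ 1 ∧ ∀ i : Fin m, (0:ℝ) ≤ f.1 i.castSucc := by
    intro f
    have hsum : ∑ i : Fin (m+1), (f.1 i : ℝ) = 1 := by
      rw [← NNReal.coe_sum, f.2]
      simp
    constructor
    · rw [Fin.sum_univ_castSucc] at hsum
      have := (f.1 (Fin.last m)).coe_nonneg
      linarith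
    · exact fun i => (f.1 i.castSucc).coe_nonneg
  refine dg_of_retract (X := cornerSet m)
    (fun g => ⟨Fin.snoc (fun i => Real.toNNReal (g.1 i)) (Real.toNNReal (1 - ∑ i, g.1 i)), ?_⟩)
    (fun f => ⟨fun i => (f.1 i.castSucc : ℝ), ⟨(key f).2, (key f).1⟩⟩) ?_ ?_ ?_
  · show ∑ i : Fin (m+1), _ = 1
    apply NNReal.coe_injective
    rw [NNReal.coe_sum, Fin.sum_univ_castSucc]
    simp only [Fin.snoc_castSucc, Fin.snoc_last]
    rw [Real.coe_toNNReal _ (by linarith [g.2.2] : (0:ℝ) ≤ 1 - ∑ i, g.1 i)]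
    have : ∀ i : Fin m, ((Real.toNNReal (g.1 i) : ℝ)) = g.1 i := fun i =>
      Real.coe_toNNReal _ (g.2.1 i)
    rw [Finset.sum_congr rfl fun i _ => this i]
    push_cast
    ring
  · refine Continuous.subtype_mk ?_ _
    apply continuous_pi
    intro j
    refine Fin.lastCases ?_ ?_ j
    · simp only [Fin.snoc_last]
      exact continuous_real_toNNReal.comp
        (continuous_const.sub (continuous_finset_sum _ fun i _ =>
          (continuous_apply i).comp continuous_subtype_val))
    · intro i
      simp only [Fin.snoc_castSucc]
      exact continuous_real_toNNReal.comp ((continuous_apply i).comp continuous_subtype_val)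
  · refine Continuous.subtype_mk ?_ _
    exact continuous_pi fun i => NNReal.continuous_coe.comp
      ((continuous_apply i.castSucc).comp continuous_subtype_val)
  · intro f
    apply Subtype.ext
    show Fin.snoc (fun i => Real.toNNReal ((f.1 i.castSucc : ℝ)))
      (Real.toNNReal (1 - ∑ i : Fin m, ((f.1 i.castSucc : ℝ)))) = f.1
    funext j
    refine Fin.lastCases ?_ ?_ j
    · rw [Fin.snoc_last]
      have hsum : ∑ i : Fin (m+1), (f.1 i : ℝ) = 1 := by
        rw [← NNReal.coe_sum, f.2]; simp
      rw [Fin.sum_univ_castSucc] at hsum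
      have : (1:ℝ) - ∑ i : Fin m, (f.1 i.castSucc : ℝ) = (f.1 (Fin.last m) : ℝ) := by
        linarith
      rw [this, Real.toNNReal_coe]
    · intro i
      rw [Fin.snoc_castSucc, Real.toNNReal_coe]

theorem dg_stdSimplexR (m : ℕ) : DeltaGeneratedSpace (stdSimplex ℝ (Fin (m+1))) := by
  haveI := dg_stdSimplex m
  refine dg_of_retract (X := {f : Fin (m+1) → NNReal | ∑ i, f i = 1})
    (fun g => ⟨fun i => (g.1 i : ℝ), fun i => (g.1 i).coe_nonneg, by
      have h2 : ∑ i, g.1 i = 1 := g.2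
      rw [← NNReal.coe_sum, h2, NNReal.coe_one]⟩)
    (fun x => ⟨fun i => Real.toNNReal (x.1 i), by
      show ∑ i, Real.toNNReal (x.1 i) = 1
      apply NNReal.coe_injective
      rw [NNReal.coe_sum, NNReal.coe_one]
      rw [Finset.sum_congr rfl fun i _ => Real.coe_toNNReal _ (x.2.1 i)]
      exact x.2.2⟩) ?_ ?_ ?_
  · exact Continuous.subtype_mk (continuous_pi fun i => NNReal.continuous_coe.comp
      ((continuous_apply i).comp continuous_subtype_val)) _
  · exact Continuous.subtype_mk (continuous_pi fun i => continuous_real_toNNReal.comp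
      ((continuous_apply i).comp continuous_subtype_val)) _
  · intro y
    exact Subtype.ext (funext fun i => Real.coe_toNNReal _ (y.2.1 i))

instance dg_toTopObj (x : SimplexCategory) :
    DeltaGeneratedSpace (SimplexCategory.toTop.{0}.obj x) := by
  haveI := dg_stdSimplexR x.len
  exact dg_of_homeomorph (X := stdSimplex ℝ (Fin (x.len+1))) Homeomorph.ulift.symm


open CategoryTheory.Limits in
theorem dg_of_isColimit {J : Type} [CategoryTheory.SmallCategory J] (F : J ⥤ TopCat.{0})
    (hF : ∀ j, DeltaGeneratedSpace (F.obj j)) {c : Cocone F} (hc : IsColimit c) :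
    DeltaGeneratedSpace c.pt := by
  have h := TopCat.coinduced_of_isColimit c hc
  have key : @DeltaGeneratedSpace c.pt (⨆ j, (F.obj j).str.coinduced (c.ι.app j)) :=
    IsGeneratedBy.iSup fun j => by haveI := hF j; exact IsGeneratedBy.coinduced _
  rw [← h] at key
  exact key

open CategoryTheory.Limits in
instance dg_sset (A : SSet.{0}) : DeltaGeneratedSpace (SSet.toTop.obj A) := by
  haveI := sSetTopAdj.leftAdjoint_preservesColimits
  have hc : IsColimit (SSet.toTop.mapCocone (Presheaf.tautologicalCocone'.{0} A)) :=
    isColimitOfPreserves SSet.toTop (Presheaf.isColimitTautologicalCocone'.{0} A)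
  refine dg_of_isColimit _ ?_ hc
  intro j
  haveI : DeltaGeneratedSpace (SimplexCategory.toTop.obj j.left) := dg_toTopObj _
  exact dg_of_homeomorph (TopCat.homeoOfIso ((SSet.toTopSimplex.app j.left).symm))

end AuxTopology
section S2

open DeltaGeneratedSpace

variable {Y : Type*} [TopologicalSpace Y]

/-- push a continuous map into the coreflection back to the original topology -/
def toOrig {Z : Type*} [TopologicalSpace Z] (g : C(Z, of (Y := Y))) : C(Z, Y) :=
  ⟨fun z => WithGeneratedByTopology.equiv (g z), WithGeneratedByTopology.continuous_equiv.comp g.continuous⟩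

@[simp] theorem toOrig_apply {Z : Type*} [TopologicalSpace Z] (g : C(Z, of (Y := Y))) (z : Z) :
    toOrig g z = g z := rfl

/-- lift a continuous map into the coreflection -/
def toDG {Z : Type*} [TopologicalSpace Z] [DeltaGeneratedSpace Z] (g : C(Z, Y)) :
    C(Z, of (Y := Y)) :=
  ⟨fun z => g z, by
    have h := (IsGeneratedBy.equiv_symm_comp_continuous_iff (fun n ↦ Fin n → ℝ)
      (Y := Z) (Z := Y) g).2 g.continuous
    exact h⟩

theorem joined_of_iff {x y : Y} : Joined (X := of (Y := Y)) x y ↔ Joined x y := by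
  constructor
  · rintro ⟨p⟩
    exact ⟨⟨toOrig p.toContinuousMap, p.source, p.target⟩⟩
  · rintro ⟨p⟩
    exact ⟨⟨toDG p.toContinuousMap, p.source, p.target⟩⟩

/-- The generalized loops of the coreflection agree with those of the original space. -/
def genLoopEquiv (n : ℕ) {y : Y} : GenLoop (Fin n) (of (Y := Y)) y ≃ GenLoop (Fin n) Y y where
  toFun p := ⟨toOrig p.1, p.2⟩
  invFun p := ⟨toDG p.1, p.2⟩
  left_inv p := by ext t; rfl
  right_inv p := by ext t; rfl

theorem genLoopEquiv_homotopic_iff (n : ℕ) {y : Y} (p q : GenLoop (Fin n) (of (Y := Y)) y) :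
    GenLoop.Homotopic p q ↔ GenLoop.Homotopic (genLoopEquiv n p) (genLoopEquiv n q) := by
  constructor
  · rintro ⟨H⟩
    exact ⟨⟨⟨toOrig H.toContinuousMap, H.map_zero_left, H.map_one_left⟩, H.prop'⟩⟩
  · rintro ⟨H⟩
    exact ⟨⟨⟨toDG H.toContinuousMap, H.map_zero_left, H.map_one_left⟩, H.prop'⟩⟩

/-- The homotopy groups of the coreflection agree with those of the original space. -/
def homotopyGroupEquiv (n : ℕ) {y : Y} :
    HomotopyGroup (Fin n) (of (Y := Y)) y ≃ HomotopyGroup (Fin n) Y y :=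
  Quotient.congr (genLoopEquiv n) (fun p q => genLoopEquiv_homotopic_iff n p q)

theorem map_toOrig_comm {Z : Type*} [TopologicalSpace Z] (g : C(Z, of (Y := Y))) (n : ℕ) (x : Z)
    (a : HomotopyGroup (Fin n) Z x) :
    homotopyGroupEquiv n (HomotopyGroup.map (Fin n) g x a) =
      HomotopyGroup.map (Fin n) (toOrig g) x a := by
  induction a using Quotient.ind
  rfl

theorem map_dom_comm {E : Type*} [TopologicalSpace E] (g : C(of (Y := E), Y))
    (hc : Continuous (fun z : E => g z)) (n : ℕ) (x : E)
    (a : HomotopyGroup (Fin n) (of (Y := E)) x) :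
    HomotopyGroup.map (Fin n) (⟨fun z => g z, hc⟩ : C(E, Y)) x (homotopyGroupEquiv n a) =
      HomotopyGroup.map (Fin n) g x a := by
  induction a using Quotient.ind
  rfl

theorem bij_map_toOrig_iff {Z : Type*} [TopologicalSpace Z] (g : C(Z, of (Y := Y))) (n : ℕ) (x : Z) :
    Function.Bijective (HomotopyGroup.map (Fin n) (toOrig g) x) ↔
      Function.Bijective (HomotopyGroup.map (Fin n) g x) := by
  have h : HomotopyGroup.map (Fin n) (toOrig g) x =
      ⇑(homotopyGroupEquiv n) ∘ HomotopyGroup.map (Fin n) g x :=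
    funext fun a => (map_toOrig_comm g n x a).symm
  rw [h]
  exact Function.Bijective.of_comp_iff' (homotopyGroupEquiv n).bijective _

theorem isWeakHomotopyEquiv_toOrig_iff {Z : Type*} [TopologicalSpace Z] (g : C(Z, of (Y := Y))) :
    (toOrig g).IsWeakHomotopyEquiv ↔ g.IsWeakHomotopyEquiv := by
  unfold ContinuousMap.IsWeakHomotopyEquiv
  refine and_congr ?_ (and_congr ?_ ?_)
  · exact forall_congr' fun y => exists_congr fun x => joined_of_iff.symm
  · exact forall_congr' fun x₀ => forall_congr' fun x₁ => imp_congr joined_of_iff.symm Iff.rfl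
  · exact forall_congr' fun n => forall_congr' fun x => bij_map_toOrig_iff g (n+1) x

theorem isWeakHomotopyEquiv_dom_iff {E : Type*} [TopologicalSpace E] (g : C(of (Y := E), Y))
    (hc : Continuous (fun z : E => g z)) :
    ContinuousMap.IsWeakHomotopyEquiv (⟨fun z => g z, hc⟩ : C(E, Y)) ↔
      g.IsWeakHomotopyEquiv := by
  unfold ContinuousMap.IsWeakHomotopyEquiv
  refine and_congr Iff.rfl (and_congr ?_ ?_)
  · exact forall_congr' fun x₀ => forall_congr' fun x₁ =>
      imp_congr Iff.rfl (joined_of_iff (Y := E)).symm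
  · refine forall_congr' fun n => forall_congr' fun x => ?_
    have h : HomotopyGroup.map (Fin (n+1)) g x =
        (HomotopyGroup.map (Fin (n+1)) (⟨fun z => g z, hc⟩ : C(E, Y)) x) ∘
          ⇑(homotopyGroupEquiv (n+1) (Y := E)) :=
      funext fun a => (map_dom_comm g hc (n+1) x a).symm
    constructor
    · intro hb
      have := hb.comp (homotopyGroupEquiv (n+1) (Y := E)).bijective
      rwa [← h] at this
    · intro hb
      rw [h] at hb
      exact ((Function.Bijective.of_comp_iff _
        (homotopyGroupEquiv (n+1) (Y := E)).bijective)).mp hb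

end S2

section AuxCategory

open DeltaGeneratedSpace

theorem ModelStructure.cof_iff_llp {C : Type*} [Category C] (M : ModelStructure C)
    {A B : C} (f : A ⟶ B) :
    M.Cof f ↔ ∀ ⦃X Y : C⦄ (p : X ⟶ Y), M.Fib p → M.W p → HasLiftingProperty f p := by
  constructor
  · intro hf X Y p hF hW
    exact M.lift_cof_trivFib f p hf hF hW
  · intro h
    obtain ⟨Z, i, p, hi, hp, hw, hip⟩ := M.fact_cof_trivFib f
    haveI : HasLiftingProperty f p := h p hp hw
    have sq : CommSq i f p (𝟙 B) := ⟨by simpa using hip⟩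
    refine M.Cof_retract f i ⟨𝟙 A, 𝟙 A, sq.lift, p, by simp, sq.fac_right, ?_, ?_⟩ hi
    · simpa using sq.fac_left.symm
    · simpa using hip

namespace DeltaGenerated

instance instDGobj (X : DeltaGeneratedCat) : DeltaGeneratedSpace X.obj := X.property

instance instDGobj' (X : DeltaGeneratedCat) : DeltaGeneratedSpace (dgToTop.obj X) := X.property

/-- The coreflection adjunction. -/
def dgAdj : dgToTop ⊣ topToDg :=
  Adjunction.mkOfHomEquiv
    { homEquiv := fun X Y =>
        { toFun := fun f => ObjectProperty.homMk (TopCat.ofHom (toDG (Y := Y) (Z := X.obj) f.hom))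
          invFun := fun g => TopCat.ofHom (toOrig (Y := Y) (Z := X.obj) g.hom.hom)
          left_inv := fun f => rfl
          right_inv := fun g => rfl }
      homEquiv_naturality_left_symm := by
        intros X' X Y f g
        rfl
      homEquiv_naturality_right := by
        intros X Y Y' f g
        rfl }

/-- The canonical unit morphism: the identity, viewed as a map into the coreflection. -/
def unitCan (X : DeltaGeneratedCat) : X ⟶ topToDg.obj (dgToTop.obj X) := by
  exact ObjectProperty.homMk (TopCat.ofHom (toDG (ContinuousMap.id X.obj)))

theorem unit_eq (adj : dgToTop ⊣ topToDg) (X : DeltaGeneratedCat) :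
    adj.unit.app X = unitCan X := by
  apply ObjectProperty.hom_ext
  ext x
  let cx : DeltaGenerated.pt ⟶ X :=
    ObjectProperty.homMk (TopCat.ofHom (⟨fun _ => x, continuous_const⟩ : C(PUnit, X.obj)))
  have h := adj.unit.naturality cx
  have h2 := congrArg (fun φ => φ.hom.hom PUnit.unit) h
  exact h2

/-- The counit component at a Δ-generated topological space is an isomorphism. -/
def counitIso (Y : TopCat.{0}) [DeltaGeneratedSpace Y] : dgToTop.obj (topToDg.obj Y) ≅ Y where
  hom := show TopCat.of (DeltaGeneratedSpace.of (Y := ↥Y)) ⟶ TopCat.of Y from TopCat.ofHom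
    ⟨fun y => WithGeneratedByTopology.equiv y, WithGeneratedByTopology.continuous_equiv⟩
  inv := by exact TopCat.ofHom (toDG (ContinuousMap.id ↥Y) : C(↥Y, DeltaGeneratedSpace.of (Y := ↥Y)))
  hom_inv_id := rfl
  inv_hom_id := rfl

theorem lift_coreflect {E B : TopCat.{0}} (H : E ⟶ B) [DeltaGeneratedSpace E]
    [DeltaGeneratedSpace B] {X Y : TopCat.{0}} (q : X ⟶ Y) (h : HasLiftingProperty H q) :
    HasLiftingProperty (dgToTop.map (topToDg.map H)) q := by
  have e : Arrow.mk (dgToTop.map (topToDg.map H)) ≅ Arrow.mk H :=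
    Arrow.isoMk (counitIso E) (counitIso B) (by ext x; rfl)
  exact (HasLiftingProperty.iff_of_arrow_iso_left e q).mpr h

theorem isWE_coreflect {E B : TopCat.{0}} (q : E ⟶ B) :
    ContinuousMap.IsWeakHomotopyEquiv
      ((topToDg.map q).hom.hom : C(DeltaGeneratedSpace.of (Y := E), DeltaGeneratedSpace.of (Y := B))) ↔
      ContinuousMap.IsWeakHomotopyEquiv (q.hom : C(E, B)) := by
  set G : C(DeltaGeneratedSpace.of (Y := E), DeltaGeneratedSpace.of (Y := B)) := (topToDg.map q).hom.hom with hG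
  have hc : Continuous (fun z : E => (toOrig G) z) := by exact q.hom.continuous
  have h1 := isWeakHomotopyEquiv_toOrig_iff (Z := DeltaGeneratedSpace.of (Y := E)) G
  have h2 := isWeakHomotopyEquiv_dom_iff (toOrig G) hc
  have h3 : (⟨fun z => (toOrig G) z, hc⟩ : C(E, B)) = q.hom := by
    apply ContinuousMap.ext; intro z; rfl
  rw [h3] at h2
  exact h1.symm.trans h2.symm

end DeltaGenerated

end AuxCategory


theorem deltaGenerated_top_quillen_equivalence
    (MD : ModelStructure DeltaGeneratedCat) (MT : ModelStructure TopCat.{0})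
    -- `MD` is the model structure on Δ-generated spaces whose weak equivalences are the weak
    -- homotopy equivalences and whose fibrations are the Serre fibrations
    (hDW : ∀ {X Y : DeltaGeneratedCat} (f : X ⟶ Y),
      MD.W f ↔ ContinuousMap.IsWeakHomotopyEquiv (f.hom.hom : C(X.obj, Y.obj)))
    (hDFib : ∀ {X Y : DeltaGeneratedCat} (f : X ⟶ Y),
      MD.Fib f ↔ ∀ (p : ℕ) (k : Fin (p + 2)),
        HasLiftingProperty (sSetToDg.map ((SSet.horn (p + 1) k).ι)) f)
    -- `MT` is the Quillen model structure on `Top`: weak equivalences are the weak homotopy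
    -- equivalences, fibrations are the Serre fibrations
    (hTW : ∀ {X Y : TopCat.{0}} (f : X ⟶ Y),
      MT.W f ↔ ContinuousMap.IsWeakHomotopyEquiv (f.hom : C(X, Y)))
    (hTFib : ∀ {X Y : TopCat.{0}} (f : X ⟶ Y),
      MT.Fib f ↔ ∀ (p : ℕ) (k : Fin (p + 2)),
        HasLiftingProperty (SSet.toTop.map ((SSet.horn (p + 1) k).ι)) f) :
    -- the inclusion/coreflector adjunction exists, is a Quillen pair, and is a
    -- Quillen equivalence
    IsQuillenPair MD MT DeltaGenerated.dgToTop ∧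
    Nonempty (DeltaGenerated.dgToTop ⊣ DeltaGenerated.topToDg) ∧
    ∀ adj : DeltaGenerated.dgToTop ⊣ DeltaGenerated.topToDg,
      IsQuillenEquivalence MD MT adj := by
  have wcoreflect : ∀ {E B : TopCat.{0}} (q : E ⟶ B), MT.W q →
      MD.W (DeltaGenerated.topToDg.map q) := by
    intro E B q hq
    rw [hDW]
    exact (DeltaGenerated.isWE_coreflect q).mpr ((hTW q).mp hq)
  have fibcoreflect : ∀ {E B : TopCat.{0}} (q : E ⟶ B), MT.Fib q →
      MD.Fib (DeltaGenerated.topToDg.map q) := by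
    intro E B q hq
    rw [hDFib]
    intro p k
    rw [← DeltaGenerated.dgAdj.hasLiftingProperty_iff]
    exact DeltaGenerated.lift_coreflect (SSet.toTop.map ((SSet.horn (p+1) k).ι)) q
      ((hTFib q).mp hq p k)
  have cofpreserve : ∀ {X Y : DeltaGeneratedCat} (f : X ⟶ Y), MD.Cof f →
      MT.Cof (DeltaGenerated.dgToTop.map f) := by
    intro X Y f hf
    rw [ModelStructure.cof_iff_llp]
    intro E B q hFib hW
    rw [DeltaGenerated.dgAdj.hasLiftingProperty_iff]
    exact MD.lift_cof_trivFib f (DeltaGenerated.topToDg.map q) hf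
      (fibcoreflect q hFib) (wcoreflect q hW)
  refine ⟨⟨fun f hf => cofpreserve f hf, fun f hf hw => ⟨cofpreserve f hf, ?_⟩⟩,
    ⟨DeltaGenerated.dgAdj⟩, ?_⟩
  · rw [hTW]
    exact (hDW f).mp hw
  · intro adj X Y _ _ f
    have hcm : adj.homEquiv X Y f =
        (ObjectProperty.homMk (TopCat.ofHom (toDG (Y := Y) (f.hom : C(X.obj, Y)))) :
          X ⟶ DeltaGenerated.topToDg.obj Y) := by
      rw [Adjunction.homEquiv_unit, DeltaGenerated.unit_eq adj X]
      apply ObjectProperty.hom_ext; ext z; rfl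
    rw [hTW, hDW, hcm]
    haveI := DeltaGenerated.instDGobj X
    have h1 := isWeakHomotopyEquiv_toOrig_iff (Z := X.obj) (toDG (Y := Y) (Z := X.obj) (f.hom : C(X.obj, Y)))
    have h2 : toOrig (toDG (Y := Y) (Z := X.obj) (f.hom : C(X.obj, Y))) = (f.hom : C(X.obj, Y)) := by
      apply ContinuousMap.ext; intro z; rfl
    rw [h2] at h1
    exact h1
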